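/- (Tate's local zeta integral for the characteristic function of the integers; the basic computation behind Theorem I at δ = 0) Let s ∈ ℂ with 0 < Re(s). Then the function x ↦ (‖x‖ : ℂ)^(s−1) (the complex power of the real number ‖x‖_p, defined to be 0 at x = 0) is μ-integrable on the closed unit ball {x : ‖x‖ ≤ 1}, and ∫_{‖x‖ ≤ 1} ‖x‖^(s−1) dμ(x) = (1 − p⁻¹) / (1 − p^(−s)). -/

import Mathlib

open MeasureTheory Complex
open scoped Classical

namespace TateAux

open scoped ENNReal

variable {p : ℕ} [hp : Fact p.Prime]

lemma one_lt_p : (1 : ℝ) < p := by exact_mod_cast hp.out.one_lt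

lemma r_pos : (0 : ℝ) < (p : ℝ)⁻¹ := inv_pos.2 (lt_trans one_pos one_lt_p)

lemma r_lt_one : (p : ℝ)⁻¹ < 1 := inv_lt_one_of_one_lt₀ one_lt_p

lemma norm_p_pow_nat (n : ℕ) : ‖((p : ℚ_[p]) ^ n)‖ = (p : ℝ)⁻¹ ^ n := by
  rw [Padic.norm_p_pow, zpow_neg, zpow_natCast, inv_pow]

lemma p_pow_ne_zero (n : ℕ) : ((p : ℚ_[p]) ^ n) ≠ 0 :=
  pow_ne_zero _ (Nat.cast_ne_zero.2 hp.out.ne_zero)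

/-- the coset decomposition of a ball of radius `p^{-n}` into `p` balls of
radius `p^{-(n+1)}`. -/
lemma ball_eq_iUnion (n : ℕ) :
    {x : ℚ_[p] | ‖x‖ ≤ (p : ℝ)⁻¹ ^ n} =
      ⋃ i : Fin p, {x : ℚ_[p] | ‖x - (i : ℕ) * (p : ℚ_[p]) ^ n‖ ≤ (p : ℝ)⁻¹ ^ (n + 1)} := by
  ext x
  simp only [Set.mem_setOf_eq, Set.mem_iUnion]
  constructor
  · intro hx
    have hy : ‖x / (p : ℚ_[p]) ^ n‖ ≤ 1 := by
      rw [norm_div, norm_p_pow_nat, div_le_one (pow_pos r_pos n)]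
      exact hx
    set z : ℤ_[p] := ⟨x / (p : ℚ_[p]) ^ n, hy⟩ with hz
    have hlt : z.appr 1 < p := by simpa using z.appr_lt 1
    refine ⟨⟨z.appr 1, hlt⟩, ?_⟩
    have hspec := z.appr_spec 1
    rw [Ideal.mem_span_singleton] at hspec
    obtain ⟨c, hc⟩ := hspec
    have hnorm : ‖z - (z.appr 1 : ℤ_[p])‖ ≤ (p : ℝ)⁻¹ := by
      rw [hc, norm_mul]
      calc ‖(p : ℤ_[p]) ^ 1‖ * ‖c‖ ≤ ‖(p : ℤ_[p]) ^ 1‖ * 1 :=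
            mul_le_mul_of_nonneg_left c.norm_le_one (norm_nonneg _)
        _ = (p : ℝ)⁻¹ := by rw [mul_one, pow_one, PadicInt.norm_p]
    have hxeq : x - ((⟨z.appr 1, hlt⟩ : Fin p) : ℕ) * (p : ℚ_[p]) ^ n
        = ((z - (z.appr 1 : ℤ_[p]) : ℤ_[p]) : ℚ_[p]) * (p : ℚ_[p]) ^ n := by
      have hzval : ((z : ℚ_[p])) = x / (p : ℚ_[p]) ^ n := rfl
      rw [PadicInt.coe_sub, sub_mul, hzval, div_mul_cancel₀ _ (p_pow_ne_zero n)]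
      norm_num
    rw [hxeq, norm_mul, norm_p_pow_nat, pow_succ]
    have : ‖((z - (z.appr 1 : ℤ_[p]) : ℤ_[p]) : ℚ_[p])‖ ≤ (p : ℝ)⁻¹ := hnorm
    calc ‖((z - (z.appr 1 : ℤ_[p]) : ℤ_[p]) : ℚ_[p])‖ * (p : ℝ)⁻¹ ^ n
        ≤ (p : ℝ)⁻¹ * (p : ℝ)⁻¹ ^ n := by
          exact mul_le_mul_of_nonneg_right this (by positivity)
      _ = (p : ℝ)⁻¹ ^ n * (p : ℝ)⁻¹ := mul_comm _ _
  · rintro ⟨i, hi⟩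
    have h1 : ‖((i : ℕ) : ℚ_[p]) * (p : ℚ_[p]) ^ n‖ ≤ (p : ℝ)⁻¹ ^ n := by
      rw [norm_mul, norm_p_pow_nat]
      have : ‖((i : ℕ) : ℚ_[p])‖ ≤ 1 := by
        exact_mod_cast Padic.norm_int_le_one ((i : ℕ) : ℤ)
      calc ‖((i : ℕ) : ℚ_[p])‖ * (p : ℝ)⁻¹ ^ n ≤ 1 * (p : ℝ)⁻¹ ^ n :=
            mul_le_mul_of_nonneg_right this (by positivity)
        _ = (p : ℝ)⁻¹ ^ n := one_mul _
    calc ‖x‖ = ‖x - (i : ℕ) * (p : ℚ_[p]) ^ n + (i : ℕ) * (p : ℚ_[p]) ^ n‖ := by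
          rw [sub_add_cancel]
      _ ≤ max ‖x - (i : ℕ) * (p : ℚ_[p]) ^ n‖ ‖((i : ℕ) : ℚ_[p]) * (p : ℚ_[p]) ^ n‖ :=
          Padic.nonarchimedean _ _
      _ ≤ (p : ℝ)⁻¹ ^ n := by
          apply max_le _ h1
          calc ‖x - (i : ℕ) * (p : ℚ_[p]) ^ n‖ ≤ (p : ℝ)⁻¹ ^ (n + 1) := hi
            _ ≤ (p : ℝ)⁻¹ ^ n :=
              pow_le_pow_of_le_one (le_of_lt r_pos) (le_of_lt r_lt_one) (Nat.le_succ n)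

lemma cosets_disjoint (n : ℕ) :
    Pairwise (Function.onFun Disjoint fun i : Fin p =>
      {x : ℚ_[p] | ‖x - (i : ℕ) * (p : ℚ_[p]) ^ n‖ ≤ (p : ℝ)⁻¹ ^ (n + 1)}) := by
  intro i j hij
  rw [Function.onFun, Set.disjoint_left]
  rintro x hxi hxj
  simp only [Set.mem_setOf_eq] at hxi hxj
  have hdiff : ‖((i : ℕ) * (p : ℚ_[p]) ^ n - (j : ℕ) * (p : ℚ_[p]) ^ n)‖ ≤ (p : ℝ)⁻¹ ^ (n + 1) := by
    rw [norm_sub_rev]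
    calc ‖(((j : ℕ) : ℚ_[p]) * (p : ℚ_[p]) ^ n - ((i : ℕ) : ℚ_[p]) * (p : ℚ_[p]) ^ n)‖
        = ‖(((j : ℕ) : ℚ_[p]) * (p : ℚ_[p]) ^ n - x) + (x - ((i : ℕ) : ℚ_[p]) * (p : ℚ_[p]) ^ n)‖ := by
          rw [sub_add_sub_cancel]
      _ ≤ max ‖((j : ℕ) : ℚ_[p]) * (p : ℚ_[p]) ^ n - x‖ ‖x - ((i : ℕ) : ℚ_[p]) * (p : ℚ_[p]) ^ n‖ :=
          Padic.nonarchimedean _ _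
      _ ≤ (p : ℝ)⁻¹ ^ (n + 1) := by
          apply max_le _ hxi
          rw [norm_sub_rev]; exact hxj
  have hne : ‖(((i : ℕ) : ℚ_[p]) - ((j : ℕ) : ℚ_[p]))‖ = 1 := by
    have hle : ‖((((i : ℕ) : ℤ) - ((j : ℕ) : ℤ) : ℤ) : ℚ_[p])‖ ≤ 1 := Padic.norm_int_le_one _
    have hnlt : ¬ ‖((((i : ℕ) : ℤ) - ((j : ℕ) : ℤ) : ℤ) : ℚ_[p])‖ < 1 := by
      rw [Padic.norm_intCast_lt_one_iff]
      intro hdvd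
      have h1 : ((i : ℕ) : ZMod p) = ((j : ℕ) : ZMod p) := by
        have := (ZMod.intCast_zmod_eq_zero_iff_dvd _ p).2 hdvd
        push_cast at this
        linear_combination this
      have : (i : ZMod p) = (j : ZMod p) := by simpa using h1
      exact hij (Fin.ext (by
        have hi2 := i.isLt; have hj2 := j.isLt
        have := congrArg ZMod.val this
        rwa [ZMod.val_cast_of_lt hi2, ZMod.val_cast_of_lt hj2] at this))
    have := lt_or_eq_of_le hle
    rcases this with h | h
    · exact absurd h hnlt
    · push_cast at h ⊢; exact h
  have : ‖((i : ℕ) * (p : ℚ_[p]) ^ n - (j : ℕ) * (p : ℚ_[p]) ^ n)‖ = (p : ℝ)⁻¹ ^ n := by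
    rw [← sub_mul, norm_mul, hne, one_mul, norm_p_pow_nat]
  rw [this] at hdiff
  have : (p : ℝ)⁻¹ ^ (n + 1) < (p : ℝ)⁻¹ ^ n :=
    pow_lt_pow_right_of_lt_one₀ r_pos r_lt_one (Nat.lt_succ_self n)
  linarith


variable [MeasurableSpace ℚ_[p]] [BorelSpace ℚ_[p]] in
lemma measurableSet_ball (t : ℝ) : MeasurableSet {x : ℚ_[p] | ‖x‖ ≤ t} :=
  (isClosed_le continuous_norm continuous_const).measurableSet

variable [MeasurableSpace ℚ_[p]] [BorelSpace ℚ_[p]] in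
lemma measurableSet_coset (c : ℚ_[p]) (t : ℝ) :
    MeasurableSet {x : ℚ_[p] | ‖x - c‖ ≤ t} :=
  (isClosed_le (continuous_norm.comp (continuous_id.sub continuous_const))
    continuous_const).measurableSet

variable [MeasurableSpace ℚ_[p]] [BorelSpace ℚ_[p]] (μ : Measure ℚ_[p]) [μ.IsAddHaarMeasure]

lemma measure_coset (c : ℚ_[p]) (t : ℝ) :
    μ {x : ℚ_[p] | ‖x - c‖ ≤ t} = μ {x : ℚ_[p] | ‖x‖ ≤ t} := by
  have : {x : ℚ_[p] | ‖x - c‖ ≤ t} = (fun h => -c + h) ⁻¹' {x : ℚ_[p] | ‖x‖ ≤ t} := by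
    ext x; simp [neg_add_eq_sub]
  rw [this, measure_preimage_add]

lemma measure_ball (hμ : μ {x : ℚ_[p] | ‖x‖ ≤ 1} = 1) (n : ℕ) :
    μ {x : ℚ_[p] | ‖x‖ ≤ (p : ℝ)⁻¹ ^ n} = (p : ℝ≥0∞)⁻¹ ^ n := by
  have hp0 : (p : ℝ≥0∞) ≠ 0 := Nat.cast_ne_zero.2 hp.out.ne_zero
  have hptop : (p : ℝ≥0∞) ≠ ⊤ := ENNReal.natCast_ne_top p
  induction n with
  | zero => simpa using hμ
  | succ n ih =>
    have key : μ {x : ℚ_[p] | ‖x‖ ≤ (p : ℝ)⁻¹ ^ n}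
        = p * μ {x : ℚ_[p] | ‖x‖ ≤ (p : ℝ)⁻¹ ^ (n + 1)} := by
      rw [ball_eq_iUnion n, measure_iUnion (cosets_disjoint n)
        (fun i => measurableSet_coset _ _)]
      have : ∀ i : Fin p, μ {x : ℚ_[p] | ‖x - (i : ℕ) * (p : ℚ_[p]) ^ n‖ ≤ (p : ℝ)⁻¹ ^ (n + 1)}
          = μ {x : ℚ_[p] | ‖x‖ ≤ (p : ℝ)⁻¹ ^ (n + 1)} := fun i => measure_coset μ _ _
      rw [tsum_congr this, tsum_fintype]
      simp [Finset.sum_const, mul_comm]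
    rw [ih] at key
    have h2 := congrArg (fun t => (p : ℝ≥0∞)⁻¹ * t) key
    simp only [← mul_assoc, ENNReal.inv_mul_cancel hp0 hptop, one_mul] at h2
    rw [← h2, pow_succ]
    ring

lemma measure_ball_ne_top (hμ : μ {x : ℚ_[p] | ‖x‖ ≤ 1} = 1) (n : ℕ) :
    μ {x : ℚ_[p] | ‖x‖ ≤ (p : ℝ)⁻¹ ^ n} ≠ ⊤ := by
  rw [measure_ball μ hμ n]
  exact ENNReal.pow_ne_top (ENNReal.inv_ne_top.2 (Nat.cast_ne_zero.2 hp.out.ne_zero))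

/-- discreteness of the norm -/
lemma norm_eq_of_mem (n : ℕ) {x : ℚ_[p]} (h1 : ‖x‖ ≤ (p : ℝ)⁻¹ ^ n)
    (h2 : ¬ ‖x‖ ≤ (p : ℝ)⁻¹ ^ (n + 1)) : ‖x‖ = (p : ℝ)⁻¹ ^ n := by
  have hx0 : x ≠ 0 := by
    rintro rfl
    exact h2 (by simpa using le_of_lt (pow_pos r_pos (n + 1)))
  have hval := Padic.norm_eq_zpow_neg_valuation hx0
  have hpe : ∀ m : ℕ, (p : ℝ)⁻¹ ^ m = (p : ℝ) ^ (-(m : ℤ)) := by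
    intro m; rw [zpow_neg, zpow_natCast, inv_pow]
  rw [hval, hpe n] at h1 ⊢
  rw [hval, hpe (n + 1)] at h2
  have hlt1 : -x.valuation ≤ -(n : ℤ) := by
    exact (zpow_le_zpow_iff_right₀ one_lt_p).1 h1
  have hlt2 : ¬ (-x.valuation ≤ -((n : ℤ) + 1)) := by
    intro h
    exact h2 (by
      rw [show (-(((n : ℕ) + 1 : ℕ) : ℤ)) = -((n : ℤ) + 1) by push_cast; ring]
      exact (zpow_le_zpow_iff_right₀ one_lt_p).2 h)
  have : -x.valuation = -(n : ℤ) := by omega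
  rw [this]

lemma sphere_eq_diff (n : ℕ) :
    {x : ℚ_[p] | ‖x‖ = (p : ℝ)⁻¹ ^ n} =
      {x : ℚ_[p] | ‖x‖ ≤ (p : ℝ)⁻¹ ^ n} \ {x : ℚ_[p] | ‖x‖ ≤ (p : ℝ)⁻¹ ^ (n + 1)} := by
  ext x
  simp only [Set.mem_setOf_eq, Set.mem_diff]
  constructor
  · intro h
    refine ⟨le_of_eq h, ?_⟩
    rw [h]
    intro hc
    exact absurd hc (not_le.2 (pow_lt_pow_right_of_lt_one₀ r_pos r_lt_one (Nat.lt_succ_self n)))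
  · rintro ⟨h1, h2⟩
    exact norm_eq_of_mem n h1 h2

lemma measurableSet_sphere (n : ℕ) : MeasurableSet {x : ℚ_[p] | ‖x‖ = (p : ℝ)⁻¹ ^ n} := by
  rw [sphere_eq_diff]
  exact (measurableSet_ball _).diff (measurableSet_ball _)

lemma measure_sphere (hμ : μ {x : ℚ_[p] | ‖x‖ ≤ 1} = 1) (n : ℕ) :
    μ {x : ℚ_[p] | ‖x‖ = (p : ℝ)⁻¹ ^ n} = (p : ℝ≥0∞)⁻¹ ^ n - (p : ℝ≥0∞)⁻¹ ^ (n + 1) := by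
  rw [sphere_eq_diff, measure_diff ?_ (measurableSet_ball _).nullMeasurableSet
    (measure_ball_ne_top μ hμ (n + 1)), measure_ball μ hμ, measure_ball μ hμ]
  intro x hx
  exact le_trans hx (le_of_lt (pow_lt_pow_right_of_lt_one₀ r_pos r_lt_one (Nat.lt_succ_self n)))

lemma measure_sphere_toReal (hμ : μ {x : ℚ_[p] | ‖x‖ ≤ 1} = 1) (n : ℕ) :
    (μ {x : ℚ_[p] | ‖x‖ = (p : ℝ)⁻¹ ^ n}).toReal = (p : ℝ)⁻¹ ^ n * (1 - (p : ℝ)⁻¹) := by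
  have hp0 : (p : ℝ≥0∞) ≠ 0 := Nat.cast_ne_zero.2 hp.out.ne_zero
  have hfin : (p : ℝ≥0∞)⁻¹ ^ n ≠ ⊤ := ENNReal.pow_ne_top (ENNReal.inv_ne_top.2 hp0)
  rw [measure_sphere μ hμ n, ENNReal.toReal_sub_of_le
    (pow_le_pow_of_le_one zero_le
      (ENNReal.inv_le_one.2 (by exact_mod_cast hp.out.one_le)) (Nat.le_succ n)) hfin]
  simp only [ENNReal.toReal_pow, ENNReal.toReal_inv, ENNReal.toReal_natCast]
  rw [pow_succ]
  ring

lemma measure_singleton_zero : μ ({0} : Set ℚ_[p]) = 0 := by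
  haveI : NullSingletonClass μ := inferInstance
  exact measure_singleton 0


omit [MeasurableSpace ℚ_[p]] [BorelSpace ℚ_[p]] in
lemma sphere_subset_ball (n : ℕ) :
    {x : ℚ_[p] | ‖x‖ = (p : ℝ)⁻¹ ^ n} ⊆ {x : ℚ_[p] | ‖x‖ ≤ 1} := by
  intro x hx
  simp only [Set.mem_setOf_eq] at hx ⊢
  rw [hx]
  exact pow_le_one₀ (le_of_lt r_pos) (le_of_lt r_lt_one)

omit [MeasurableSpace ℚ_[p]] [BorelSpace ℚ_[p]] in
lemma ball_eq_union_spheres :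
    {x : ℚ_[p] | ‖x‖ ≤ 1} = {0} ∪ ⋃ n : ℕ, {x : ℚ_[p] | ‖x‖ = (p : ℝ)⁻¹ ^ n} := by
  ext x
  simp only [Set.mem_setOf_eq, Set.mem_union, Set.mem_singleton_iff, Set.mem_iUnion]
  constructor
  · intro hx
    rcases eq_or_ne x 0 with h | h
    · exact Or.inl h
    · refine Or.inr ⟨x.valuation.toNat, ?_⟩
      have hval := Padic.norm_eq_zpow_neg_valuation h
      have hv0 : 0 ≤ x.valuation := by
        by_contra hneg
        push_neg at hneg
        have : (1 : ℝ) < (p : ℝ) ^ (-x.valuation) := by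
          apply one_lt_zpow₀ one_lt_p
          omega
        rw [hval] at hx
        linarith
      rw [hval, inv_pow, ← zpow_natCast (p : ℝ) x.valuation.toNat,
        Int.toNat_of_nonneg hv0, zpow_neg]
  · rintro (rfl | ⟨n, hn⟩)
    · simp
    · rw [hn]
      exact pow_le_one₀ (le_of_lt r_pos) (le_of_lt r_lt_one)

omit [MeasurableSpace ℚ_[p]] [BorelSpace ℚ_[p]] in
lemma spheres_disjoint :
    Pairwise (Function.onFun Disjoint fun n : ℕ => {x : ℚ_[p] | ‖x‖ = (p : ℝ)⁻¹ ^ n}) := by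
  intro i j hij
  rw [Function.onFun, Set.disjoint_left]
  rintro x hxi hxj
  simp only [Set.mem_setOf_eq] at hxi hxj
  exact hij ((pow_right_strictAnti₀ r_pos r_lt_one).injective (hxi ▸ hxj))

end TateAux


open TateAux in
open scoped ENNReal in
/-- Tate's local zeta integral for the characteristic function of the integers
(`δ = 0`): for `Re s > 0`, `∫_{‖x‖ ≤ 1} ‖x‖^{s−1} dμ(x) = (1 − p⁻¹)/(1 − p^{−s})`. -/

theorem tate_local_zeta_integral (p : ℕ) [Fact p.Prime]
    [MeasurableSpace ℚ_[p]] [BorelSpace ℚ_[p]]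
    (μ : Measure ℚ_[p]) [μ.IsAddHaarMeasure]
    (hμ : μ {x : ℚ_[p] | ‖x‖ ≤ 1} = 1)
    (s : ℂ) (hs : 0 < s.re) :
    IntegrableOn (fun x : ℚ_[p] =>
        if x = 0 then 0 else (‖x‖ : ℂ) ^ (s - 1)) {x : ℚ_[p] | ‖x‖ ≤ 1} μ ∧
      ∫ x in {x : ℚ_[p] | ‖x‖ ≤ 1},
          (if x = 0 then 0 else (‖x‖ : ℂ) ^ (s - 1)) ∂μ
        = (1 - (p : ℂ)⁻¹) / (1 - (p : ℂ) ^ (-s)) := by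
  set r : ℝ := (p : ℝ)⁻¹ with hr
  set f : ℚ_[p] → ℂ := fun x => if x = 0 then 0 else (‖x‖ : ℂ) ^ (s - 1) with hf
  set S : ℕ → Set ℚ_[p] := fun n => {x : ℚ_[p] | ‖x‖ = r ^ n} with hS
  set c : ℕ → ℂ := fun n => ((r ^ n : ℝ) : ℂ) ^ (s - 1) with hc
  have hr_pos : (0 : ℝ) < r := r_pos
  have hr_lt : r < 1 := r_lt_one
  -- measure restriction
  have hae : {x : ℚ_[p] | ‖x‖ ≤ 1} =ᵐ[μ] ⋃ n : ℕ, S n := by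
    rw [MeasureTheory.ae_eq_set]
    constructor
    · refine measure_mono_null ?_ (measure_singleton_zero μ)
      intro x hx
      rcases hx with ⟨h1, h2⟩
      have h1' := (ball_eq_union_spheres (p := p)) ▸ h1
      rcases h1' with h | h
      · exact h
      · exact absurd h h2
    · have : (⋃ n : ℕ, S n) \ {x : ℚ_[p] | ‖x‖ ≤ 1} = ∅ := by
        rw [Set.diff_eq_empty]
        exact Set.iUnion_subset fun n => sphere_subset_ball n
      rw [this, measure_empty]
  have hrestrict : μ.restrict {x : ℚ_[p] | ‖x‖ ≤ 1} = μ.restrict (⋃ n : ℕ, S n) :=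
    Measure.restrict_congr_set hae
  -- measurability of f
  have hfm : Measurable f := by
    have heq : f = fun x : ℚ_[p] =>
        if x = 0 then 0 else Complex.exp (Complex.log (‖x‖ : ℂ) * (s - 1)) := by
      funext x
      by_cases hx : x = 0
      · simp [hf, hx]
      · simp only [hf, if_neg hx]
        rw [Complex.cpow_def_of_ne_zero]
        exact_mod_cast ne_of_gt (by exact_mod_cast norm_pos_iff.2 hx)
    rw [heq]
    refine Measurable.ite ?_ measurable_const ?_
    · simpa using (measurableSet_singleton (0 : ℚ_[p]))
    · exact ((Complex.measurable_log.comp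
        (Complex.measurable_ofReal.comp measurable_norm)).mul_const _).cexp
  -- f is constantly `c n` on `S n`
  have hfc : ∀ n : ℕ, ∀ x ∈ S n, f x = c n := by
    intro n x hx
    have hx' : ‖x‖ = r ^ n := hx
    have hx0 : x ≠ 0 := by
      intro h
      rw [h, norm_zero] at hx'
      exact absurd hx'.symm (ne_of_gt (pow_pos hr_pos n))
    simp only [hf, if_neg hx0, hc, hx']
  -- norm of the constant
  have hcnorm : ∀ n : ℕ, ‖c n‖ = (r ^ n) ^ (s.re - 1) := by
    intro n
    rw [hc, Complex.norm_cpow_eq_rpow_re_of_pos (pow_pos hr_pos n)]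
    norm_num
  -- integrability
  have henn : ∀ n : ℕ, (p : ℝ≥0∞)⁻¹ ^ n = ENNReal.ofReal (r ^ n) := by
    intro n
    rw [ENNReal.ofReal_pow (le_of_lt hr_pos), hr, ENNReal.ofReal_inv_of_pos
      (by exact_mod_cast (Fact.out : p.Prime).pos), ENNReal.ofReal_natCast]
  set q : ℝ := r ^ s.re with hq
  have hq_pos : 0 < q := Real.rpow_pos_of_pos hr_pos _
  have hq_lt : q < 1 := Real.rpow_lt_one (le_of_lt hr_pos) hr_lt hs
  have hSm : ∀ n : ℕ, MeasurableSet (S n) := fun n => measurableSet_sphere n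
  have hSd : Pairwise (Function.onFun Disjoint S) := spheres_disjoint
  have hterm_le : ∀ n : ℕ, (‖c n‖₊ : ℝ≥0∞) * μ (S n) ≤ ENNReal.ofReal (q ^ n) := by
    intro n
    have h1 : μ (S n) ≤ ENNReal.ofReal (r ^ n) := by
      rw [← henn n, hS]
      simp only
      rw [measure_sphere μ hμ n]
      exact tsub_le_self
    have h2 : (‖c n‖₊ : ℝ≥0∞) = ENNReal.ofReal ((r ^ n) ^ (s.re - 1)) := by
      rw [← enorm_eq_nnnorm, ← ofReal_norm, hcnorm n]
    calc (‖c n‖₊ : ℝ≥0∞) * μ (S n)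
        ≤ ENNReal.ofReal ((r ^ n) ^ (s.re - 1)) * ENNReal.ofReal (r ^ n) := by
          rw [h2]; exact mul_le_mul' le_rfl h1
      _ = ENNReal.ofReal ((r ^ n) ^ (s.re - 1) * r ^ n) :=
          (ENNReal.ofReal_mul (by positivity)).symm
      _ = ENNReal.ofReal (q ^ n) := by
          congr 1
          rw [show (r ^ n) ^ (s.re - 1) * r ^ n
              = (r ^ n) ^ (s.re - 1) * (r ^ n) ^ (1 : ℝ) by rw [Real.rpow_one],
            ← Real.rpow_add (pow_pos hr_pos n), sub_add_cancel, hq,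
            ← Real.rpow_natCast r n, ← Real.rpow_mul (le_of_lt hr_pos), mul_comm,
            Real.rpow_mul (le_of_lt hr_pos), Real.rpow_natCast]
  have hsum_fin : ∑' n : ℕ, (‖c n‖₊ : ℝ≥0∞) * μ (S n) < ⊤ := by
    refine lt_of_le_of_lt (ENNReal.tsum_le_tsum hterm_le) ?_
    rw [← ENNReal.ofReal_tsum_of_nonneg (fun n => by positivity)
      (summable_geometric_of_lt_one (le_of_lt hq_pos) hq_lt)]
    exact ENNReal.ofReal_lt_top
  have hlint : ∫⁻ x in ⋃ n : ℕ, S n, (‖f x‖₊ : ℝ≥0∞) ∂μ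
      = ∑' n : ℕ, (‖c n‖₊ : ℝ≥0∞) * μ (S n) := by
    rw [lintegral_iUnion hSm hSd]
    congr 1
    funext n
    rw [setLIntegral_congr_fun (hSm n)
      (fun x hx => by rw [hfc n x hx])]
    exact setLIntegral_const _ _
  have hint : IntegrableOn f {x : ℚ_[p] | ‖x‖ ≤ 1} μ := by
    constructor
    · exact hfm.aestronglyMeasurable.restrict
    · rw [hasFiniteIntegral_def, hrestrict]
      exact hlint ▸ hsum_fin
  refine ⟨hint, ?_⟩
  have hIU : IntegrableOn f (⋃ n : ℕ, S n) μ := by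
    rwa [IntegrableOn, ← hrestrict]
  have hnorm : ‖(p : ℂ) ^ (-s)‖ < 1 := by
    have hcast : (p : ℂ) = ((p : ℝ) : ℂ) := by push_cast; rfl
    rw [hcast,
      Complex.norm_cpow_eq_rpow_re_of_pos (lt_trans one_pos one_lt_p)]
    simp only [Complex.neg_re]
    exact Real.rpow_lt_one_of_one_lt_of_neg one_lt_p (neg_lt_zero.2 hs)
  have hterm : ∀ n : ℕ, (r ^ n * (1 - r)) • c n
      = (1 - (p : ℂ)⁻¹) * ((p : ℂ) ^ (-s)) ^ n := by
    intro n
    have hw0 : ((r : ℂ)) ≠ 0 := by exact_mod_cast ne_of_gt hr_pos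
    have hwn0 : ((r : ℂ)) ^ n ≠ 0 := pow_ne_zero _ hw0
    have harg : ((r : ℂ)).arg = 0 := Complex.arg_ofReal_of_nonneg (le_of_lt hr_pos)
    have hcn : ((r : ℂ)) ^ n * c n = (((r : ℂ)) ^ (s : ℂ)) ^ n := by
      rw [hc]
      push_cast
      rw [show ((r : ℂ)) ^ n * ((r : ℂ) ^ n) ^ (s - 1)
          = ((r : ℂ) ^ n) ^ (1 : ℂ) * ((r : ℂ) ^ n) ^ (s - 1) by rw [Complex.cpow_one],
        ← Complex.cpow_add _ _ hwn0, show (1 : ℂ) + (s - 1) = s by ring,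
        ← Complex.cpow_nat_mul' (x := (r : ℂ)) (n := n)
          (by rw [harg, mul_zero]; exact neg_lt_zero.2 Real.pi_pos)
          (by rw [harg, mul_zero]; exact Real.pi_pos.le) s,
        Complex.cpow_nat_mul]
    have hrs : ((r : ℂ)) ^ (s : ℂ) = (p : ℂ) ^ (-s) := by
      have : ((r : ℂ)) = ((p : ℂ))⁻¹ := by rw [hr]; push_cast; rfl
      rw [this, Complex.inv_cpow _ _
        (by rw [Complex.natCast_arg]; exact ne_of_lt Real.pi_pos), ← Complex.cpow_neg]
    calc (r ^ n * (1 - r)) • c n = ((r ^ n * (1 - r) : ℝ) : ℂ) * c n := Complex.real_smul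
      _ = ((1 - r : ℝ) : ℂ) * (((r : ℂ)) ^ n * c n) := by push_cast; ring
      _ = (1 - (p : ℂ)⁻¹) * ((p : ℂ) ^ (-s)) ^ n := by
          rw [hcn, hrs]
          congr 1
          rw [hr]
          push_cast
          ring
  calc ∫ x in {x : ℚ_[p] | ‖x‖ ≤ 1}, f x ∂μ
      = ∫ x in ⋃ n : ℕ, S n, f x ∂μ := by rw [hrestrict]
    _ = ∑' n : ℕ, ∫ x in S n, f x ∂μ := integral_iUnion hSm hSd hIU
    _ = ∑' n : ℕ, (1 - (p : ℂ)⁻¹) * ((p : ℂ) ^ (-s)) ^ n := by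
        congr 1
        funext n
        rw [setIntegral_congr_fun (hSm n) (hfc n), setIntegral_const, measureReal_def,
          measure_sphere_toReal μ hμ n, hterm n]
    _ = (1 - (p : ℂ)⁻¹) * (1 - (p : ℂ) ^ (-s))⁻¹ := by
        rw [tsum_mul_left, tsum_geometric_of_norm_lt_one hnorm]
    _ = (1 - (p : ℂ)⁻¹) / (1 - (p : ℂ) ^ (-s)) := (div_eq_mul_inv _ _).symm
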